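/- Let V be an orthogonal representation of G = Γ × S¹ (Γ a finite group), let f : ℝ × C([-r,0]; V) → V be G-equivariant in the sense that f(α, (γ, e^{iτ})·x) = e^{τJ} γ f(α, x), and define Φ(α, w, x) := f̃(α, iw, x) − wJx where f̃(α, λ, x) := f(α, ξ(λ)x) with (ξ(iw)x)(θ) = e^{wJθ}x_* + x₀ for the decomposition x = x₀ + x_* into S¹-fixed and orthogonal parts. Then x(t) := e^{wJt}x₀' is a solution of ẋ(t) = f(α, x_t) if and only if Φ(α, w, x₀') = 0. -/

import Mathlib

open NormedSpace

/-- Derivative of the rotating-wave ansatz. -/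
theorem aux_deriv {n : ℕ} (J : Matrix (Fin n) (Fin n) ℝ) (w t : ℝ) (x₀ : Fin n → ℝ) :
    HasDerivAt (fun s : ℝ => (exp ((w * s) • J)).mulVec x₀)
      (w • J.mulVec ((exp ((w * t) • J)).mulVec x₀)) t := by
  letI : NormedRing (Matrix (Fin n) (Fin n) ℝ) := Matrix.linftyOpNormedRing
  letI : NormedAlgebra ℝ (Matrix (Fin n) (Fin n) ℝ) := Matrix.linftyOpNormedAlgebra
  have h := hasDerivAt_exp_smul_const (𝕂 := ℝ) (w • J) t
  let L : Matrix (Fin n) (Fin n) ℝ →ₗ[ℝ] (Fin n → ℝ) :=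
    { toFun := fun M => M.mulVec x₀
      map_add' := fun A B => Matrix.add_mulVec A B x₀
      map_smul' := fun c A => Matrix.smul_mulVec c A x₀ }
  have hL := (LinearMap.toContinuousLinearMap L).hasFDerivAt.comp_hasDerivAt t h
  simp only [Function.comp_def, LinearMap.coe_toContinuousLinearMap'] at hL
  have heq : (fun s : ℝ => L (exp (s • (w • J)))) =
      fun s : ℝ => (exp ((w * s) • J)).mulVec x₀ := by
    ext s i
    simp [L, smul_smul, mul_comm]
  replace hL := hL.congr_of_eventuallyEq (Filter.EventuallyEq.of_eq heq.symm)
  refine hL.congr_deriv (Eq.symm ?_)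
  have hc : Commute J (exp (t • w • J)) :=
    ((Commute.refl J).smul_right w |>.smul_right t).exp_right
  show _ = L (exp (t • w • J) * w • J)
  rw [Matrix.mul_smul, ← hc.eq]
  simp only [L, LinearMap.coe_mk, AddHom.coe_mk, Matrix.smul_mulVec,
    Matrix.mulVec_mulVec, smul_smul, mul_comm]

/-- Semigroup property of `exp` along a one-parameter group. -/
theorem aux_exp_add {n : ℕ} (J : Matrix (Fin n) (Fin n) ℝ) (a b : ℝ) :
    exp ((a + b) • J) = exp (a • J) * exp (b • J) := by
  letI : NormedRing (Matrix (Fin n) (Fin n) ℝ) := Matrix.linftyOpNormedRing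
  letI : NormedAlgebra ℝ (Matrix (Fin n) (Fin n) ℝ) := Matrix.linftyOpNormedAlgebra
  rw [add_smul]
  exact Matrix.exp_add_of_commute _ _ (((Commute.refl J).smul_right b).smul_left a)

open NormedSpace in
/-- For a `Γ × S¹`-equivariant functional `f` (here we record the
`S¹`-equivariance `f(α, e^{τJ}∘x) = e^{τJ} f(α,x)`), the rotating-wave ansatz
`x(t) = e^{wJt}x₀` solves the FDE `ẋ(t) = f(α, x_t)` if and only if
`Φ(α,w,x₀) := f̃(α, iw, x₀) − wJx₀ = 0`, where `f̃(α,iw,y) = f(α, θ ↦ e^{wJθ}y)`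
(note that `ξ(iw)y (θ) = e^{wJθ}y_* + y₀ = e^{wJθ}y` since `e^{τJ}` fixes `V₀ = V^{S¹}`). -/
theorem stmt5 {n : ℕ} (r : ℝ) (hr : 0 < r) (J : Matrix (Fin n) (Fin n) ℝ)
    (hOrth : ∀ τ : ℝ, exp (τ • J) ∈ Matrix.orthogonalGroup (Fin n) ℝ)
    (f : ℝ → ((Set.Icc (-r) (0:ℝ)) → (Fin n → ℝ)) → (Fin n → ℝ))
    (hequiv : ∀ (α τ : ℝ) (x : (Set.Icc (-r) (0:ℝ)) → (Fin n → ℝ)),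
        f α (fun θ => (exp (τ • J)).mulVec (x θ)) = (exp (τ • J)).mulVec (f α x))
    (α w : ℝ) (x₀ : Fin n → ℝ)
    (Φ : ℝ → ℝ → (Fin n → ℝ) → (Fin n → ℝ))
    (hΦ : ∀ (a b : ℝ) (y : Fin n → ℝ),
        Φ a b y = f a (fun θ => (exp ((b * (θ : ℝ)) • J)).mulVec y) - b • J.mulVec y) :
    (∀ t : ℝ, HasDerivAt (fun s : ℝ => (exp ((w * s) • J)).mulVec x₀)
        (f α (fun θ => (exp ((w * (t + (θ : ℝ))) • J)).mulVec x₀)) t)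
      ↔ Φ α w x₀ = 0 := by
  -- key: rewrite the shifted argument via the semigroup property and equivariance
  have hshift : ∀ t : ℝ,
      f α (fun θ : Set.Icc (-r) (0:ℝ) => (exp ((w * (t + (θ : ℝ))) • J)).mulVec x₀)
        = (exp ((w * t) • J)).mulVec
            (f α (fun θ : Set.Icc (-r) (0:ℝ) => (exp ((w * (θ : ℝ)) • J)).mulVec x₀)) := by
    intro t
    have harg : (fun θ : Set.Icc (-r) (0:ℝ) => (exp ((w * (t + (θ : ℝ))) • J)).mulVec x₀)
        = fun θ : Set.Icc (-r) (0:ℝ) =>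
            (exp ((w * t) • J)).mulVec ((exp ((w * (θ : ℝ)) • J)).mulVec x₀) := by
      funext θ
      rw [Matrix.mulVec_mulVec, ← aux_exp_add J (w * t) (w * (θ : ℝ)), ← mul_add]
    rw [harg, hequiv α (w * t) (fun θ => (exp ((w * (θ : ℝ)) • J)).mulVec x₀)]
  constructor
  · intro hsol
    have h0 := hsol 0
    have h0' := aux_deriv J w 0 x₀
    have hx : (exp ((w * 0) • J)) = 1 := by
      rw [mul_zero, zero_smul, exp_zero]
    rw [hx, Matrix.one_mulVec] at h0'
    have huniq := h0.unique h0'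
    simp only [zero_add] at huniq
    rw [hΦ, sub_eq_zero, huniq]
  · intro hphi t
    have hf0 : f α (fun θ : Set.Icc (-r) (0:ℝ) => (exp ((w * (θ : ℝ)) • J)).mulVec x₀)
        = w • J.mulVec x₀ := by
      have := hΦ α w x₀
      rw [hphi] at this
      exact (sub_eq_zero.mp this.symm)
    have key : f α (fun θ : Set.Icc (-r) (0:ℝ) => (exp ((w * (t + (θ : ℝ))) • J)).mulVec x₀)
        = w • J.mulVec ((exp ((w * t) • J)).mulVec x₀) := by
      letI : NormedRing (Matrix (Fin n) (Fin n) ℝ) := Matrix.linftyOpNormedRing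
      letI : NormedAlgebra ℝ (Matrix (Fin n) (Fin n) ℝ) := Matrix.linftyOpNormedAlgebra
      rw [hshift t, hf0, Matrix.mulVec_smul, Matrix.mulVec_mulVec, Matrix.mulVec_mulVec,
        (((Commute.refl J).smul_left (w * t)).exp_left).eq]
    rw [key]
    exact aux_deriv J w t x₀
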